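/- arXiv:2105.07536 — 4 statements merged into one kernel-verified Lean document; each statement's English description precedes it below -/
import Mathlib

section
/- Let P be an n×n symmetric nonnegative matrix, h > 0, α > 0, and H_n = (1/(n(n-1)))(1_n 1_n^T − I_n). If the operator norm ‖h·L(αP)‖ < 2, then 1 ≤ ‖I_n − h·L(αP − H_n)‖ ≤ 1 + h/(n-1). -/
open Matrix BigOperators

/-- The graph Laplacian L(A) = D(A) - A. -/
noncomputable def lap {n : ℕ} (A : Matrix (Fin n) (Fin n) ℝ) : Matrix (Fin n) (Fin n) ℝ :=
  Matrix.diagonal (fun j => ∑ i, A i j) - A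

/-- The centering matrix H_n = (1/(n(n-1)))(1 1ᵀ − I). -/
noncomputable def Hmat (n : ℕ) : Matrix (Fin n) (Fin n) ℝ :=
  (((n : ℝ) * ((n : ℝ) - 1))⁻¹) • (Matrix.of (fun _ _ => (1 : ℝ)) - 1)

/-- Spectral (ℓ²-operator) norm of a matrix. -/
noncomputable def specNorm {m n : ℕ} (A : Matrix (Fin m) (Fin n) ℝ) : ℝ :=
  ‖LinearMap.toContinuousLinearMap
    (Matrix.toLin (EuclideanSpace.basisFun (Fin n) ℝ).toBasis
      (EuclideanSpace.basisFun (Fin m) ℝ).toBasis A)‖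

noncomputable def clmMat {n : ℕ} (A : Matrix (Fin n) (Fin n) ℝ) :
    EuclideanSpace ℝ (Fin n) →L[ℝ] EuclideanSpace ℝ (Fin n) :=
  LinearMap.toContinuousLinearMap
    (Matrix.toLin (EuclideanSpace.basisFun (Fin n) ℝ).toBasis
      (EuclideanSpace.basisFun (Fin n) ℝ).toBasis A)

lemma specNorm_eq_clm {n : ℕ} (A : Matrix (Fin n) (Fin n) ℝ) : specNorm A = ‖clmMat A‖ := rfl

lemma clmMat_apply {n : ℕ} (A : Matrix (Fin n) (Fin n) ℝ) (x : EuclideanSpace ℝ (Fin n))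
    (i : Fin n) : clmMat A x i = ∑ j, A i j * x j := by
  show Matrix.toEuclideanLin A x i = _
  rfl

lemma inner_clmMat {n : ℕ} (A : Matrix (Fin n) (Fin n) ℝ) (x y : EuclideanSpace ℝ (Fin n)) :
    (inner ℝ (clmMat A x) y : ℝ) = ∑ i, (∑ j, A i j * x j) * y i := by
  rw [PiLp.inner_apply]
  refine Finset.sum_congr rfl fun i _ => ?_
  rw [RCLike.inner_apply, conj_trivial, clmMat_apply]
  exact mul_comm _ _

lemma euclid_inner_sum {n : ℕ} (x y : EuclideanSpace ℝ (Fin n)) :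
    (inner ℝ x y : ℝ) = ∑ i, x i * y i := by
  rw [PiLp.inner_apply]
  refine Finset.sum_congr rfl fun i _ => ?_
  rw [RCLike.inner_apply, conj_trivial]
  exact mul_comm _ _

lemma clmMat_symm {n : ℕ} {A : Matrix (Fin n) (Fin n) ℝ} (hA : ∀ i j, A i j = A j i)
    (x y : EuclideanSpace ℝ (Fin n)) :
    (inner ℝ (clmMat A x) y : ℝ) = inner ℝ x (clmMat A y) := by
  rw [inner_clmMat, euclid_inner_sum]
  simp only [Finset.sum_mul, Finset.mul_sum, clmMat_apply]
  rw [Finset.sum_comm]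
  refine Finset.sum_congr rfl fun i _ => Finset.sum_congr rfl fun j _ => ?_
  rw [hA j i]
  ring

/-- Self-adjoint operator norm bound from the quadratic form. -/
lemma norm_le_of_selfadj {E : Type*} [NormedAddCommGroup E] [InnerProductSpace ℝ E]
    (T : E →L[ℝ] E) (hsym : ∀ x y : E, (inner ℝ (T x) y : ℝ) = inner ℝ x (T y))
    {C : ℝ} (hC : 0 ≤ C) (hb : ∀ x : E, |(inner ℝ (T x) x : ℝ)| ≤ C * ‖x‖ ^ 2) : ‖T‖ ≤ C := by
  refine T.opNorm_le_bound hC fun x => ?_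
  rcases eq_or_ne (T x) 0 with h0 | h0
  · rw [h0, norm_zero]
    positivity
  have hx : x ≠ 0 := by rintro rfl; simp at h0
  have hxn : 0 < ‖x‖ := norm_pos_iff.mpr hx
  have hTxn : 0 < ‖T x‖ := norm_pos_iff.mpr h0
  set y : E := (‖x‖ / ‖T x‖) • T x with hy
  have hyn : ‖y‖ = ‖x‖ := by
    rw [hy, norm_smul, Real.norm_eq_abs, abs_of_nonneg (by positivity)]
    field_simp
  have h1 : (inner ℝ (T y) x : ℝ) = inner ℝ (T x) y := by
    rw [hsym y x, real_inner_comm]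
  have key : 4 * (inner ℝ (T x) y : ℝ) =
      inner ℝ (T (x + y)) (x + y) - inner ℝ (T (x - y)) (x - y) := by
    simp only [map_add, map_sub, inner_add_left, inner_add_right, inner_sub_left,
      inner_sub_right, h1]
    ring
  have h4 : (inner ℝ (T x) y : ℝ) = ‖x‖ * ‖T x‖ := by
    rw [hy, real_inner_smul_right, real_inner_self_eq_norm_sq]
    field_simp
  have hb1 := hb (x + y)
  have hb2 := hb (x - y)
  have hpar : ‖x + y‖ ^ 2 + ‖x - y‖ ^ 2 = 2 * (‖x‖ ^ 2 + ‖y‖ ^ 2) := by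
    rw [norm_add_sq_real, norm_sub_sq_real]
    ring
  have habs1 : (inner ℝ (T (x + y)) (x + y) : ℝ) ≤ C * ‖x + y‖ ^ 2 :=
    le_trans (le_abs_self _) hb1
  have habs2 : -(C * ‖x - y‖ ^ 2) ≤ (inner ℝ (T (x - y)) (x - y) : ℝ) :=
    neg_le_of_abs_le hb2
  have hfin : 4 * (‖x‖ * ‖T x‖) ≤ C * (2 * (‖x‖ ^ 2 + ‖y‖ ^ 2)) := by
    rw [← h4, key]
    nlinarith [habs1, habs2, hpar]
  rw [hyn] at hfin
  nlinarith [hfin, hxn]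

lemma lap_row_sum {n : ℕ} (A : Matrix (Fin n) (Fin n) ℝ) (x : Fin n → ℝ) (i : Fin n) :
    ∑ j, lap A i j * x j = (∑ k, A k i) * x i - ∑ j, A i j * x j := by
  unfold lap
  simp only [Matrix.sub_apply, Matrix.diagonal_apply, sub_mul, ite_mul, zero_mul]
  rw [Finset.sum_sub_distrib, Finset.sum_ite_eq Finset.univ i (fun j => (∑ k, A k i) * x j)]
  simp

lemma lap_quad_nonneg {n : ℕ} {A : Matrix (Fin n) (Fin n) ℝ} (hA : ∀ i j, A i j = A j i)
    (hA0 : ∀ i j, 0 ≤ A i j) (x : Fin n → ℝ) :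
    0 ≤ ∑ i, (∑ j, lap A i j * x j) * x i := by
  have h1 : ∑ i, (∑ j, lap A i j * x j) * x i
      = ∑ i, ∑ j, A i j * (x i * x i - x j * x i) := by
    refine Finset.sum_congr rfl fun i _ => ?_
    rw [lap_row_sum, sub_mul, Finset.sum_mul, Finset.sum_mul, Finset.sum_mul, ← Finset.sum_sub_distrib]
    refine Finset.sum_congr rfl fun j _ => ?_
    rw [hA j i]
    ring
  set T := ∑ i, ∑ j, A i j * (x i * x i - x j * x i) with hT
  have h2 : T = ∑ i, ∑ j, A i j * (x j * x j - x i * x j) := by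
    rw [hT, Finset.sum_comm]
    refine Finset.sum_congr rfl fun i _ => Finset.sum_congr rfl fun j _ => ?_
    rw [hA j i]
  have h3 : T + T = ∑ i, ∑ j, A i j * (x i - x j) ^ 2 := by
    nth_rewrite 2 [h2]
    rw [← Finset.sum_add_distrib]
    refine Finset.sum_congr rfl fun i _ => ?_
    rw [← Finset.sum_add_distrib]
    refine Finset.sum_congr rfl fun j _ => ?_
    ring
  have h4 : 0 ≤ T + T := by
    rw [h3]
    refine Finset.sum_nonneg fun i _ => Finset.sum_nonneg fun j _ => ?_
    exact mul_nonneg (hA0 i j) (sq_nonneg _)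
  rw [h1]
  linarith

lemma lap_sub {n : ℕ} (A B : Matrix (Fin n) (Fin n) ℝ) : lap (A - B) = lap A - lap B := by
  unfold lap
  ext i j
  simp only [Matrix.sub_apply, Matrix.diagonal_apply, Finset.sum_sub_distrib]
  split <;> ring

lemma clmMat_add {n : ℕ} (A B : Matrix (Fin n) (Fin n) ℝ) :
    clmMat (A + B) = clmMat A + clmMat B := by
  unfold clmMat
  rw [map_add, map_add]

lemma clmMat_sub {n : ℕ} (A B : Matrix (Fin n) (Fin n) ℝ) :
    clmMat (A - B) = clmMat A - clmMat B := by
  unfold clmMat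
  rw [map_sub, map_sub]

lemma clmMat_smul {n : ℕ} (c : ℝ) (A : Matrix (Fin n) (Fin n) ℝ) :
    clmMat (c • A) = c • clmMat A := by
  unfold clmMat
  rw [_root_.map_smul, _root_.map_smul]

lemma clmMat_one {n : ℕ} : clmMat (1 : Matrix (Fin n) (Fin n) ℝ) = 1 := by
  unfold clmMat
  rw [Matrix.toLin_one]
  rfl

/-- If ‖h·L(αP)‖ < 2, then 1 ≤ ‖I − h·L(αP − H_n)‖ ≤ 1 + h/(n-1). -/
theorem norm_iter_matrix_bounds {n : ℕ} (hn : 2 ≤ n)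
    (P : Matrix (Fin n) (Fin n) ℝ) (hsym : P.IsSymm) (hnonneg : ∀ i j, 0 ≤ P i j)
    (α h : ℝ) (hα : 0 < α) (hh : 0 < h)
    (hnorm : specNorm (h • lap (α • P)) < 2) :
    1 ≤ specNorm ((1 : Matrix (Fin n) (Fin n) ℝ) - h • lap (α • P - Hmat n)) ∧
    specNorm ((1 : Matrix (Fin n) (Fin n) ℝ) - h • lap (α • P - Hmat n))
      ≤ 1 + h / ((n : ℝ) - 1) := by
  have hn1 : (2 : ℝ) ≤ (n : ℝ) := by exact_mod_cast hn
  have hn0 : (0 : ℝ) < (n : ℝ) := by linarith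
  have hnm1 : (0 : ℝ) < (n : ℝ) - 1 := by linarith
  set nn : ℝ := (n : ℝ) with hnn
  set c : ℝ := (nn * (nn - 1))⁻¹ with hc
  have hcpos : 0 < c := by
    rw [hc]
    positivity
  have hcn : c * nn = (nn - 1)⁻¹ := by
    rw [hc]
    field_simp
  -- symmetry of α•P and of Hmat
  have hPs : ∀ i j, (α • P) i j = (α • P) j i := by
    intro i j
    simp only [Matrix.smul_apply, smul_eq_mul]
    rw [hsym.apply j i]
  have hHs : ∀ i j, Hmat n i j = Hmat n j i := by
    intro i j
    simp only [Hmat, Matrix.smul_apply, Matrix.sub_apply, Matrix.of_apply, Matrix.one_apply,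
      smul_eq_mul]
    by_cases hij : i = j <;> simp [hij, eq_comm]
  -- entries of Hmat and its column sums
  have hHe : ∀ i j, Hmat n i j = c * (1 - if i = j then 1 else 0) := by
    intro i j
    simp only [Hmat, Matrix.smul_apply, Matrix.sub_apply, Matrix.of_apply, Matrix.one_apply,
      smul_eq_mul, hc]
    rfl
  have hHcol : ∀ i : Fin n, ∑ k, Hmat n k i = c * (nn - 1) := by
    intro i
    simp only [hHe]
    rw [← Finset.mul_sum, Finset.sum_sub_distrib]
    simp [Finset.card_univ, hnn]
  set M : Matrix (Fin n) (Fin n) ℝ :=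
    (1 : Matrix (Fin n) (Fin n) ℝ) - h • lap (α • P - Hmat n) with hM
  -- M as operator
  have hMdecomp : M = 1 - h • lap (α • P) + h • lap (Hmat n) := by
    rw [hM, lap_sub, smul_sub]
    abel
  have hMsym : ∀ i j, M i j = M j i := by
    intro i j
    have hAs : ∀ a b : Fin n, (α • P - Hmat n) a b = (α • P - Hmat n) b a := by
      intro a b
      simp only [Matrix.sub_apply]
      rw [hPs a b, hHs a b]
    have hls : ∀ i j, lap (α • P - Hmat n) i j = lap (α • P - Hmat n) j i := by
      intro i j
      unfold lap
      simp only [Matrix.sub_apply, Matrix.diagonal_apply]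
      by_cases hij : i = j
      · subst hij; rfl
      · rw [if_neg hij, if_neg (Ne.symm hij), hPs i j, hHs i j]
    rw [hM]
    simp only [Matrix.sub_apply, Matrix.smul_apply, Matrix.one_apply, smul_eq_mul]
    rw [hls i j]
    by_cases hij : i = j <;> simp [hij, eq_comm]
  -- quadratic form identity
  have hquad : ∀ x : EuclideanSpace ℝ (Fin n),
      (inner ℝ (clmMat M x) x : ℝ) = (inner ℝ x x : ℝ)
        - h * (inner ℝ (clmMat (lap (α • P)) x) x : ℝ)
        + h * (inner ℝ (clmMat (lap (Hmat n)) x) x : ℝ) := by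
    intro x
    rw [hMdecomp, clmMat_add, clmMat_sub, clmMat_smul, clmMat_smul, clmMat_one]
    simp only [ContinuousLinearMap.add_apply, ContinuousLinearMap.sub_apply,
      ContinuousLinearMap.smul_apply, ContinuousLinearMap.one_apply]
    rw [inner_add_left, inner_sub_left, real_inner_smul_left, real_inner_smul_left]
  -- Laplacian of α•P : nonneg quadratic form
  have hQLpos : ∀ x : EuclideanSpace ℝ (Fin n),
      0 ≤ (inner ℝ (clmMat (lap (α • P)) x) x : ℝ) := by
    intro x
    rw [inner_clmMat]
    exact lap_quad_nonneg hPs (fun i j => by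
      simp only [Matrix.smul_apply, smul_eq_mul]
      exact mul_nonneg hα.le (hnonneg i j)) x
  -- Laplacian of α•P : quadratic form bounded by 2‖x‖²
  have hQLle : ∀ x : EuclideanSpace ℝ (Fin n),
      h * (inner ℝ (clmMat (lap (α • P)) x) x : ℝ) ≤ 2 * ‖x‖ ^ 2 := by
    intro x
    have heq : h * (inner ℝ (clmMat (lap (α • P)) x) x : ℝ)
        = (inner ℝ (clmMat (h • lap (α • P)) x) x : ℝ) := by
      rw [clmMat_smul]
      simp only [ContinuousLinearMap.smul_apply]
      rw [real_inner_smul_left]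
    rw [heq]
    have h1 : (inner ℝ (clmMat (h • lap (α • P)) x) x : ℝ)
        ≤ ‖clmMat (h • lap (α • P)) x‖ * ‖x‖ := real_inner_le_norm _ _
    have h2 : ‖clmMat (h • lap (α • P)) x‖ ≤ ‖clmMat (h • lap (α • P))‖ * ‖x‖ :=
      (clmMat (h • lap (α • P))).le_opNorm x
    have h3 : ‖clmMat (h • lap (α • P))‖ < 2 := by
      rw [← specNorm_eq_clm]; exact hnorm
    nlinarith [norm_nonneg x, norm_nonneg (clmMat (h • lap (α • P)) x),
      (norm_nonneg (clmMat (h • lap (α • P))))]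
  -- Laplacian of Hmat quadratic form
  have hQH : ∀ x : EuclideanSpace ℝ (Fin n),
      (inner ℝ (clmMat (lap (Hmat n)) x) x : ℝ)
        = c * nn * (∑ i, x i * x i) - c * (∑ i, x i) ^ 2 := by
    intro x
    rw [inner_clmMat]
    have hrow : ∀ i : Fin n, ∑ j, Hmat n i j * x j = c * (∑ j, x j) - c * x i := by
      intro i
      simp only [hHe]
      have heach : ∀ j : Fin n, c * (1 - if i = j then 1 else 0) * x j
          = c * x j - (if i = j then c * x j else 0) := by
        intro j
        by_cases hij : i = j <;> simp [hij]
      rw [Finset.sum_congr rfl fun j _ => heach j, Finset.sum_sub_distrib, ← Finset.mul_sum,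
        Finset.sum_ite_eq Finset.univ i (fun j => c * x j)]
      simp
    have hlrow : ∀ i : Fin n, ∑ j, lap (Hmat n) i j * x j
        = c * nn * x i - c * (∑ j, x j) := by
      intro i
      rw [lap_row_sum, hHcol i, hrow i]
      ring
    rw [Finset.sum_congr rfl fun i _ => congrArg (· * x i) (hlrow i)]
    rw [Finset.sum_congr rfl fun i (_ : i ∈ Finset.univ) => (sub_mul _ _ (x i))]
    rw [Finset.sum_sub_distrib]
    have e1 : ∑ i, c * nn * x i * x i = c * nn * ∑ i, x i * x i := by
      rw [Finset.mul_sum]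
      exact Finset.sum_congr rfl fun i _ => by ring
    have e2 : ∑ i, c * (∑ j, x j) * x i = c * (∑ i, x i) ^ 2 := by
      have : ∀ i : Fin n, c * (∑ j, x j) * x i = c * ((∑ j, x j) * x i) := fun i => by ring
      rw [Finset.sum_congr rfl fun i _ => this i, ← Finset.mul_sum, ← Finset.mul_sum, sq]
    rw [e1, e2]
  -- norm-squared as a sum
  have hns : ∀ x : EuclideanSpace ℝ (Fin n), (inner ℝ x x : ℝ) = ∑ i, x i * x i :=
    fun x => euclid_inner_sum x x
  have hnorm2 : ∀ x : EuclideanSpace ℝ (Fin n), ‖x‖ ^ 2 = ∑ i, x i * x i := by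
    intro x
    rw [← real_inner_self_eq_norm_sq, hns]
  -- Cauchy-Schwarz for the sum
  have hCS : ∀ x : EuclideanSpace ℝ (Fin n), (∑ i, x i) ^ 2 ≤ nn * ∑ i, x i * x i := by
    intro x
    have := sq_sum_le_card_mul_sum_sq (s := (Finset.univ : Finset (Fin n))) (f := fun i => x i)
    simp only [Finset.card_univ, Fintype.card_fin] at this
    calc (∑ i, x i) ^ 2 ≤ (n : ℝ) * ∑ i, (x i) ^ 2 := this
      _ = nn * ∑ i, x i * x i := by
          rw [hnn]
          congr 1
          exact Finset.sum_congr rfl fun i _ => sq (x i) ▸ by ring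
  -- the bound on the quadratic form of M
  have hQM : ∀ x : EuclideanSpace ℝ (Fin n),
      |(inner ℝ (clmMat M x) x : ℝ)| ≤ (1 + h / (nn - 1)) * ‖x‖ ^ 2 := by
    intro x
    have hql := hQLpos x
    have hql2 := hQLle x
    have hcs := hCS x
    rw [hnorm2 x] at hql2
    rw [hquad x, hns x, hQH x, hnorm2 x]
    set QL : ℝ := (inner ℝ (clmMat (lap (α • P)) x) x : ℝ) with hQLdef
    set S : ℝ := ∑ i, x i with hS
    set t : ℝ := ∑ i, x i * x i with ht
    have htn : 0 ≤ t := by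
      rw [ht]
      exact Finset.sum_nonneg fun i _ => mul_self_nonneg _
    have hSnn : 0 ≤ S ^ 2 := sq_nonneg _
    have e : h / (nn - 1) = h * (c * nn) := by
      rw [div_eq_mul_inv, hcn]
    rw [e, abs_le]
    clear_value QL S t c nn
    have k1 : h * (c * S ^ 2) ≤ h * (c * (nn * t)) :=
      mul_le_mul_of_nonneg_left (mul_le_mul_of_nonneg_left hcs hcpos.le) hh.le
    have k2 : 0 ≤ h * (c * nn) * t :=
      mul_nonneg (mul_nonneg hh.le (mul_nonneg hcpos.le hn0.le)) htn
    have k3 : 0 ≤ h * (c * S ^ 2) := mul_nonneg hh.le (mul_nonneg hcpos.le hSnn)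
    have k4 : 0 ≤ h * QL := mul_nonneg hh.le hql
    constructor
    · nlinarith [hql2, k1, k2]
    · nlinarith [k3, k4]
  -- upper bound
  have hMsymCLM : ∀ x y : EuclideanSpace ℝ (Fin n),
      (inner ℝ (clmMat M x) y : ℝ) = inner ℝ x (clmMat M y) := clmMat_symm hMsym
  have hCpos : (0 : ℝ) ≤ 1 + h / (nn - 1) := by positivity
  have hupper : specNorm M ≤ 1 + h / (nn - 1) := by
    rw [specNorm_eq_clm]
    exact norm_le_of_selfadj (clmMat M) hMsymCLM hCpos hQM
  -- lower bound : M u = u for the constant vector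
  set u : EuclideanSpace ℝ (Fin n) := (WithLp.equiv 2 (Fin n → ℝ)).symm (fun _ => 1) with hu
  have hui : ∀ i, u i = 1 := fun i => rfl
  have hMu : clmMat M u = u := by
    ext i
    rw [clmMat_apply]
    have hrsum : ∀ a : Fin n, ∑ j, lap (α • P - Hmat n) a j = 0 := by
      intro a
      have := lap_row_sum (α • P - Hmat n) (fun _ => 1) a
      simp only [mul_one] at this
      rw [this]
      have hsymm : ∀ i j, (α • P - Hmat n) i j = (α • P - Hmat n) j i := by
        intro i j
        simp only [Matrix.sub_apply]
        rw [hPs i j, hHs i j]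
      rw [Finset.sum_congr rfl fun k (_ : k ∈ Finset.univ) => (hsymm a k).symm]
      ring
    have : ∑ j, M i j * u j = ∑ j, M i j := by
      refine Finset.sum_congr rfl fun j _ => by rw [hui j, mul_one]
    rw [this, hui i, hM]
    simp only [Matrix.sub_apply, Matrix.smul_apply, Matrix.one_apply, smul_eq_mul]
    rw [Finset.sum_sub_distrib]
    have h1 : ∑ j, (if i = j then (1:ℝ) else 0) = 1 := by simp
    have h2 : ∑ j, h * lap (α • P - Hmat n) i j = 0 := by
      rw [← Finset.mul_sum, hrsum i, mul_zero]
    rw [h1, h2, sub_zero]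
  have hu0 : u ≠ 0 := by
    intro h0
    have : u ⟨0, by omega⟩ = 0 := by rw [h0]; rfl
    rw [hui] at this
    exact one_ne_zero this
  have hlower : 1 ≤ specNorm M := by
    rw [specNorm_eq_clm]
    have h1 : ‖clmMat M u‖ ≤ ‖clmMat M‖ * ‖u‖ := (clmMat M).le_opNorm u
    rw [hMu] at h1
    have h2 : 0 < ‖u‖ := norm_pos_iff.mpr hu0
    nlinarith
  exact ⟨hlower, hupper⟩
end

section
/- Let y_1,...,y_n ∈ R^2 and let q_{ij} = (1+‖y_i−y_j‖²)^{-1} / Z with Z = Σ_{ℓ≠s}(1+‖y_ℓ−y_s‖²)^{-1}. Let η = (diam{y_i})². Then for all i ≠ j, |q_{ij}/(1+‖y_i−y_j‖²) − 1/(n(n-1))| ≤ 2η/(n(n-1)(1−η)), provided η < 1. -/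
open BigOperators

/-- Squared Euclidean distance between the i-th and j-th embedding points in R². -/
noncomputable def dsq {n : ℕ} (y : Fin n → Fin 2 → ℝ) (i j : Fin n) : ℝ :=
  ∑ l, (y i l - y j l) ^ 2

/-- Normalizing constant Z = Σ_{ℓ≠s} (1 + ‖y_ℓ − y_s‖²)⁻¹. -/
noncomputable def Znorm {n : ℕ} (y : Fin n → Fin 2 → ℝ) : ℝ :=
  ∑ i, ∑ j, if i = j then 0 else (1 + dsq y i j)⁻¹

/-- t-distributed similarity q_{ij} = (1 + ‖y_i − y_j‖²)⁻¹ / Z. -/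
noncomputable def qsim {n : ℕ} (y : Fin n → Fin 2 → ℝ) (i j : Fin n) : ℝ :=
  (1 + dsq y i j)⁻¹ / Znorm y

/-- With η = (diam{y_i})² < 1, for all i ≠ j,
|q_{ij}/(1 + ‖y_i − y_j‖²) − 1/(n(n-1))| ≤ 2η/(n(n-1)(1 − η)). -/
theorem qsim_concentration {n : ℕ} (hn : 2 ≤ n) (y : Fin n → Fin 2 → ℝ)
    (η : ℝ) (hη : η = ⨆ i, ⨆ j, dsq y i j) (hη1 : η < 1) :
    ∀ i j : Fin n, i ≠ j →
      |qsim y i j / (1 + dsq y i j) - ((n : ℝ) * ((n : ℝ) - 1))⁻¹|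
        ≤ 2 * η / ((n : ℝ) * ((n : ℝ) - 1) * (1 - η)) := by
  intro i j hij
  have hd0 : ∀ a b : Fin n, 0 ≤ dsq y a b := by
    intro a b
    exact Finset.sum_nonneg fun l _ => sq_nonneg _
  have hb : ∀ a b : Fin n, dsq y a b ≤ η := by
    intro a b
    rw [hη]
    have h1 : dsq y a b ≤ ⨆ b', dsq y a b' :=
      le_ciSup (Set.Finite.bddAbove (Set.finite_range _)) b
    exact h1.trans (le_ciSup (f := fun a' => ⨆ b', dsq y a' b')
      (Set.Finite.bddAbove (Set.finite_range _)) a)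
  have hη0 : 0 ≤ η := (hd0 i j).trans (hb i j)
  have hn2 : (2:ℝ) ≤ (n:ℝ) := by exact_mod_cast hn
  set N : ℝ := (n : ℝ) * ((n : ℝ) - 1) with hNdef
  have hNpos : 0 < N := by nlinarith
  have h1η : (0:ℝ) < 1 + η := by linarith
  have h1mη : (0:ℝ) < 1 - η := by linarith
  have hsum : ∀ c : ℝ, (∑ a : Fin n, ∑ b : Fin n, if a = b then (0:ℝ) else c) = N * c := by
    intro c
    have hrow : ∀ a : Fin n, (∑ b : Fin n, if a = b then (0:ℝ) else c)
        = (n:ℝ) * c - c := by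
      intro a
      have : (∑ b : Fin n, if a = b then (0:ℝ) else c)
          = ∑ b : Fin n, (c - if a = b then c else 0) := by
        apply Finset.sum_congr rfl
        intro b _
        by_cases h : a = b <;> simp [h]
      rw [this, Finset.sum_sub_distrib, Finset.sum_const, Finset.sum_ite_eq]
      simp [mul_comm]
    rw [Finset.sum_congr rfl fun a _ => hrow a, Finset.sum_const]
    simp [hNdef]
    ring
  have hZhi : Znorm y ≤ N := by
    have h : Znorm y ≤ ∑ a : Fin n, ∑ b : Fin n, if a = b then (0:ℝ) else 1 := by
      apply Finset.sum_le_sum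
      intro a _
      apply Finset.sum_le_sum
      intro b _
      by_cases h : a = b
      · simp [h]
      · simp only [h, if_false]
        rw [inv_le_one_iff₀]
        right
        linarith [hd0 a b]
    calc Znorm y ≤ _ := h
    _ = N := by rw [hsum]; ring
  have hZlo : N * (1 + η)⁻¹ ≤ Znorm y := by
    have h : (∑ a : Fin n, ∑ b : Fin n, if a = b then (0:ℝ) else (1+η)⁻¹) ≤ Znorm y := by
      apply Finset.sum_le_sum
      intro a _
      apply Finset.sum_le_sum
      intro b _
      by_cases h : a = b
      · simp [h]
      · simp only [h, if_false]
        apply inv_anti₀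
        · linarith [hd0 a b]
        · linarith [hb a b]
    calc N * (1+η)⁻¹ = _ := (hsum _).symm
    _ ≤ Znorm y := h
  have hZpos : 0 < Znorm y := lt_of_lt_of_le (by positivity) hZlo
  set d : ℝ := dsq y i j with hddef
  have hd1 : (1:ℝ) ≤ 1 + d := by linarith [hd0 i j]
  have hdη : 1 + d ≤ 1 + η := by linarith [hb i j]
  have htpos : (0:ℝ) < 1 + d := by linarith
  set x : ℝ := qsim y i j / (1 + d) with hxdef
  have hx : x = (1 + d)⁻¹ * (Znorm y)⁻¹ * (1 + d)⁻¹ := by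
    rw [hxdef, qsim]
    field_simp
    rw [← hddef, div_self htpos.ne']
  have h2 : (Znorm y)⁻¹ ≤ (1+η)/N := by
    have hq : N / (1+η) ≤ Znorm y := by rw [div_eq_mul_inv]; exact hZlo
    have h := inv_anti₀ (by positivity) hq
    rwa [inv_div] at h
  have hub : x ≤ (1 + η) / N := by
    rw [hx]
    have h1 : (1+d)⁻¹ ≤ 1 := by rw [inv_le_one_iff₀]; right; exact hd1
    calc (1+d)⁻¹ * (Znorm y)⁻¹ * (1+d)⁻¹ ≤ 1 * ((1+η)/N) * 1 := by
          gcongr <;> positivity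
    _ = (1+η)/N := by ring
  have hlb : (1+η)⁻¹ * N⁻¹ * (1+η)⁻¹ ≤ x := by
    rw [hx]
    have h3 : (1+η)⁻¹ ≤ (1+d)⁻¹ := inv_anti₀ htpos hdη
    have h4 : N⁻¹ ≤ (Znorm y)⁻¹ := inv_anti₀ hZpos hZhi
    gcongr <;> positivity
  rw [abs_le]
  constructor
  · have key : N⁻¹ - (1+η)⁻¹ * N⁻¹ * (1+η)⁻¹ ≤ 2 * η / (N * (1 - η)) := by
      have e : N⁻¹ - (1+η)⁻¹ * N⁻¹ * (1+η)⁻¹ = (2*η + η^2) / (N * (1+η)^2) := by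
        field_simp
        ring
      rw [e, div_le_div_iff₀ (by positivity) (by positivity)]
      nlinarith [mul_nonneg (mul_nonneg hNpos.le hη0) hη0,
        mul_nonneg (mul_nonneg (mul_nonneg hNpos.le hη0) hη0) hη0]
    linarith
  · have key : (1+η)/N - N⁻¹ ≤ 2 * η / (N * (1 - η)) := by
      have e : (1+η)/N - N⁻¹ = η / N := by field_simp; ring
      rw [e, div_le_div_iff₀ hNpos (by positivity)]
      nlinarith [mul_nonneg (mul_nonneg hNpos.le hη0) hη0]
    linarith
end

section
/- Let p_{ij} ≥ 0, α > 0, y_1,...,y_n ∈ R^2 with η = (diam{y_i})² < 1, and define S_{ij}(α) = (α·p_{ij} − q_{ij})/(1 + ‖y_i−y_j‖²) with q_{ij} as the t-distributed similarity. Then for all i ≠ j, |S_{ij}(α) − α·p_{ij} + 1/(n(n-1))| ≤ α·p_{ij}·η + 2η/(n(n-1)(1−η)). -/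
open BigOperators

/-- The exaggerated gradient coefficient S_{ij}(α) = (α p_{ij} − q_{ij})/(1 + ‖y_i − y_j‖²). -/
noncomputable def Scoef {n : ℕ} (p : Fin n → Fin n → ℝ) (α : ℝ)
    (y : Fin n → Fin 2 → ℝ) (i j : Fin n) : ℝ :=
  (α * p i j - qsim y i j) / (1 + dsq y i j)

set_option maxHeartbeats 1000000 in
/-- With η = (diam{y_i})² < 1 and p_{ij} ≥ 0, α > 0, for all i ≠ j,
|S_{ij}(α) − α p_{ij} + 1/(n(n-1))| ≤ α p_{ij} η + 2η/(n(n-1)(1 − η)). -/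
theorem Scoef_approx {n : ℕ} (hn : 2 ≤ n) (y : Fin n → Fin 2 → ℝ)
    (p : Fin n → Fin n → ℝ) (hp : ∀ i j, 0 ≤ p i j) (α : ℝ) (hα : 0 < α)
    (η : ℝ) (hη : η = ⨆ i, ⨆ j, dsq y i j) (hη1 : η < 1) :
    ∀ i j : Fin n, i ≠ j →
      |Scoef p α y i j - α * p i j + ((n : ℝ) * ((n : ℝ) - 1))⁻¹|
        ≤ α * p i j * η + 2 * η / ((n : ℝ) * ((n : ℝ) - 1) * (1 - η)) := by
  intro i j hij
  have hd0 : ∀ a b : Fin n, 0 ≤ dsq y a b :=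
    fun a b => Finset.sum_nonneg fun l _ => sq_nonneg _
  have hbd1 : ∀ a : Fin n, BddAbove (Set.range fun b => dsq y a b) :=
    fun a => (Set.finite_range _).bddAbove
  have hbd2 : BddAbove (Set.range fun a => ⨆ b, dsq y a b) :=
    (Set.finite_range _).bddAbove
  have hdη : ∀ a b : Fin n, dsq y a b ≤ η := by
    intro a b
    rw [hη]
    exact le_trans (le_ciSup (hbd1 a) b) (le_ciSup hbd2 a)
  have hη0 : 0 ≤ η := le_trans (hd0 i j) (hdη i j)
  have h1η : (0:ℝ) < 1 - η := by linarith
  set N : ℝ := (n : ℝ) * ((n : ℝ) - 1) with hNdef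
  have hn2 : (2:ℝ) ≤ (n:ℝ) := by exact_mod_cast hn
  have hN0 : 0 < N := by nlinarith
  have hsum : ∀ c : ℝ, (∑ a : Fin n, ∑ b : Fin n, if a = b then 0 else c) = N * c := by
    intro c
    have h1 : ∀ a : Fin n, (∑ b : Fin n, if a = b then (0:ℝ) else c) = (n:ℝ) * c - c := by
      intro a
      have h2 : (∑ b : Fin n, if a = b then (0:ℝ) else c)
          = ∑ b : Fin n, (c - if a = b then c else 0) := by
        apply Finset.sum_congr rfl
        intro b _
        by_cases h : a = b <;> simp [h]
      rw [h2, Finset.sum_sub_distrib, Finset.sum_const, Finset.sum_ite_eq]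
      simp [Finset.card_univ, mul_comm]
    rw [Finset.sum_congr rfl fun a _ => h1 a, Finset.sum_const, Finset.card_univ]
    simp [hNdef]
    ring
  have hZup : Znorm y ≤ N := by
    rw [Znorm]
    calc (∑ a : Fin n, ∑ b : Fin n, if a = b then 0 else (1 + dsq y a b)⁻¹)
        ≤ ∑ a : Fin n, ∑ b : Fin n, if a = b then 0 else (1:ℝ) := by
          apply Finset.sum_le_sum; intro a _; apply Finset.sum_le_sum; intro b _
          by_cases h : a = b
          · simp [h]
          · simp only [h, if_false]
            rw [inv_le_one_iff₀]
            right; nlinarith [hd0 a b]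
      _ = N := by rw [hsum]; ring
  have hZlow : N * (1 + η)⁻¹ ≤ Znorm y := by
    rw [Znorm]
    calc N * (1 + η)⁻¹ = ∑ a : Fin n, ∑ b : Fin n, if a = b then 0 else (1 + η)⁻¹ := by
          rw [hsum]
      _ ≤ ∑ a : Fin n, ∑ b : Fin n, if a = b then 0 else (1 + dsq y a b)⁻¹ := by
          apply Finset.sum_le_sum; intro a _; apply Finset.sum_le_sum; intro b _
          by_cases h : a = b
          · simp [h]
          · simp only [h, if_false]
            apply inv_anti₀
            · nlinarith [hd0 a b]
            · nlinarith [hdη a b]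
  have hZ0 : 0 < Znorm y := lt_of_lt_of_le (by positivity) hZlow
  set d : ℝ := dsq y i j with hddef
  have hd : 0 ≤ d := hd0 i j
  have hdle : d ≤ η := hdη i j
  set u : ℝ := 1 + d with hudef
  have hu1 : (1:ℝ) ≤ u := by rw [hudef]; linarith
  have hu0 : (0:ℝ) < u := by linarith
  set Z : ℝ := Znorm y with hZdef
  have hS : Scoef p α y i j = α * p i j / u - 1 / (u^2 * Z) := by
    rw [Scoef, qsim, ← hddef, ← hudef, ← hZdef]
    field_simp
  set S : ℝ := Scoef p α y i j with hSdef
  set ap : ℝ := α * p i j with hapdef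
  have hap : 0 ≤ ap := mul_nonneg hα.le (hp i j)
  clear_value N d u Z S ap
  clear hSdef hZdef hddef hNdef hapdef hη hbd1 hbd2 hdη hd0 hsum 
  set T : ℝ := 1 / (u^2 * Z) with hTdef
  have hu2 : u^2 ≤ (1+η)^2 := by nlinarith
  have hu21 : (1:ℝ) ≤ u^2 := by nlinarith
  have hTu : T ≤ (1 + η) / N := by
    have h1 : N * (1+η)⁻¹ ≤ u^2 * Z := by
      have h1' : (1:ℝ) * Z ≤ u^2 * Z := mul_le_mul_of_nonneg_right hu21 hZ0.le
      linarith
    rw [hTdef]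
    calc 1/(u^2*Z) ≤ 1/(N * (1+η)⁻¹) := one_div_le_one_div_of_le (by positivity) h1
      _ = (1+η)/N := by rw [one_div, mul_inv, inv_inv, mul_comm, div_eq_mul_inv]
  have hTl : 1 / ((1+η)^2 * N) ≤ T := by
    have h2 : u^2 * Z ≤ (1+η)^2 * N :=
      mul_le_mul hu2 hZup hZ0.le (by positivity)
    rw [hTdef]
    exact one_div_le_one_div_of_le (by positivity) h2
  have hA : |ap / u - ap| ≤ ap * η := by
    have he : ap / u - ap = -(ap * d / u) := by
      rw [hudef]
      have h3 : (1:ℝ) + d ≠ 0 := by positivity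
      field_simp
      ring
    rw [he, abs_neg, abs_of_nonneg (by positivity)]
    rw [div_le_iff₀ hu0]
    nlinarith [mul_le_mul_of_nonneg_left hdle hap,
      mul_le_mul_of_nonneg_left hu1 (mul_nonneg hap hη0)]
  have hB : |(N⁻¹ : ℝ) - T| ≤ 2 * η / (N * (1 - η)) := by
    rw [abs_le]
    constructor
    · have e : (1+η)/N = N⁻¹ + η/N := by rw [add_div, one_div]
      have h4 : η/N ≤ 2*η/(N*(1-η)) := by
        rw [div_le_div_iff₀ hN0 (by positivity)]
        nlinarith [mul_nonneg hη0 hN0.le, mul_nonneg (mul_nonneg hη0 hη0) hN0.le]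
      linarith [hTu]
    · have hpure : (2*η+η^2)*(1-η) ≤ 2*η*(1+η)^2 := by
        nlinarith [sq_nonneg η, mul_nonneg hη0 (mul_nonneg hη0 hη0)]
      have h5 : N⁻¹ - 1/((1+η)^2*N) ≤ 2*η/(N*(1-η)) := by
        rw [inv_eq_one_div, div_sub_div _ _ hN0.ne' (by positivity),
          div_le_div_iff₀ (by positivity) (by positivity)]
        nlinarith [mul_le_mul_of_nonneg_right hpure (mul_pos hN0 hN0).le]
      linarith [hTl]
  calc |S - ap + N⁻¹|
      = |(ap / u - ap) + (N⁻¹ - T)| := by rw [hS, hTdef]; congr 1; ring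
    _ ≤ |ap / u - ap| + |N⁻¹ - T| := abs_add_le _ _
    _ ≤ ap * η + 2 * η / (N * (1 - η)) := add_le_add hA hB
end

section
/- Under the setting of the previous expectation formula with Δ = 0 and Σ having all eigenvalues λ_i satisfying C^{-1} ≤ λ_i ≤ C and τ² ≥ c·p for constants C, c > 0, the expected Gaussian kernel between two points from the same Gaussian component satisfies E[K_{ij}] = (Π_{i=1}^p (2λ_i/τ² + 1))^{-1/2}, and hence c' ≤ E[K_{ij}] ≤ 1 for a constant c' > 0 independent of p. -/
open Matrix MeasureTheory BigOperators Real

-- 1D Gaussian computation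
lemma one_dim (l τ : ℝ) (hl : 0 < l) (hτ : 0 < τ) :
    ∫ x : ℝ, (Real.sqrt (4 * π * l))⁻¹ *
        (Real.exp (-x ^ 2 / (2 * τ ^ 2)) * Real.exp (-(x ^ 2 * l⁻¹) / 4))
      = (Real.sqrt (2 * l / τ ^ 2 + 1))⁻¹ := by
  have hτ2 : (0:ℝ) < τ ^ 2 := by positivity
  set b : ℝ := (2 * τ ^ 2)⁻¹ + l⁻¹ / 4 with hbdef
  have hb : 0 < b := by positivity
  have hA : (0:ℝ) < 2 * l / τ ^ 2 + 1 := by positivity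
  have hexp : ∀ x : ℝ, Real.exp (-x ^ 2 / (2 * τ ^ 2)) * Real.exp (-(x ^ 2 * l⁻¹) / 4)
      = Real.exp (-b * x ^ 2) := by
    intro x
    rw [← Real.exp_add]
    congr 1
    rw [hbdef]
    field_simp [hbdef]
    ring
  simp_rw [hexp]
  rw [integral_const_mul, integral_gaussian]
  have key : π / b = (4 * π * l) * (2 * l / τ ^ 2 + 1)⁻¹ := by
    rw [hbdef]
    field_simp
    ring
  rw [key]
  have hsplit : Real.sqrt (4 * π * l * (2 * l / τ ^ 2 + 1)⁻¹)
      = Real.sqrt (4 * π * l) * (Real.sqrt (2 * l / τ ^ 2 + 1))⁻¹ := by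
    rw [Real.sqrt_mul (by positivity), Real.sqrt_inv]
  rw [hsplit, ← mul_assoc, inv_mul_cancel₀ (by positivity), one_mul]

lemma sqrt_prod' {ι : Type*} (s : Finset ι) (f : ι → ℝ) (h : ∀ i ∈ s, 0 ≤ f i) :
    Real.sqrt (∏ i ∈ s, f i) = ∏ i ∈ s, Real.sqrt (f i) := by
  induction s using Finset.cons_induction with
  | empty => simp
  | cons a s ha ih =>
      rw [Finset.prod_cons, Finset.prod_cons, Real.sqrt_mul (h a (Finset.mem_cons_self a s)),
        ih fun i hi => h i (Finset.mem_cons_of_mem hi)]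

/-- Within-cluster expected Gaussian kernel: with Δ = 0, covariance S with eigenvalues
λ_i ∈ [C⁻¹, C] and bandwidth τ² ≥ c·p, the expected kernel
E[K] = (Π_{i=1}^p (2λ_i/τ² + 1))^{-1/2}, and hence c' ≤ E[K] ≤ 1 for a constant
c' > 0 independent of the dimension p. -/
theorem expected_kernel_same_cluster_bounds (C c : ℝ) (hC : 0 < C) (hc : 0 < c) :
    ∃ c' : ℝ, 0 < c' ∧
      ∀ (p : ℕ) (S U : Matrix (Fin p) (Fin p) ℝ) (lam : Fin p → ℝ) (τ : ℝ),
        S.PosDef → U * Uᵀ = 1 → S = U * Matrix.diagonal lam * Uᵀ →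
        (∀ i, C⁻¹ ≤ lam i ∧ lam i ≤ C) → 0 < τ → c * p ≤ τ ^ 2 →
        ((∫ z : Fin p → ℝ,
              Real.exp (-(∑ i, z i ^ 2) / (2 * τ ^ 2)) *
                ((Real.sqrt ((2 * Real.pi) ^ p * ((2 : ℝ) • S).det))⁻¹ *
                  Real.exp (-(z ⬝ᵥ (S⁻¹).mulVec z) / 4)))
            = (Real.sqrt (∏ i, (2 * lam i / τ ^ 2 + 1)))⁻¹) ∧
        c' ≤ (∫ z : Fin p → ℝ,
              Real.exp (-(∑ i, z i ^ 2) / (2 * τ ^ 2)) *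
                ((Real.sqrt ((2 * Real.pi) ^ p * ((2 : ℝ) • S).det))⁻¹ *
                  Real.exp (-(z ⬝ᵥ (S⁻¹).mulVec z) / 4))) ∧
        (∫ z : Fin p → ℝ,
              Real.exp (-(∑ i, z i ^ 2) / (2 * τ ^ 2)) *
                ((Real.sqrt ((2 * Real.pi) ^ p * ((2 : ℝ) • S).det))⁻¹ *
                  Real.exp (-(z ⬝ᵥ (S⁻¹).mulVec z) / 4))) ≤ 1 := by
  refine ⟨Real.exp (-(C / c)), Real.exp_pos _, ?_⟩
  intro p S U lam τ hS hUUt hSdecomp hlam hτ hτc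
  have hτ2 : (0:ℝ) < τ ^ 2 := by positivity
  have hl : ∀ i, 0 < lam i := fun i => lt_of_lt_of_le (inv_pos.2 hC) (hlam i).1
  have hUtU : Uᵀ * U = 1 := mul_eq_one_comm.mp hUUt
  have hinv : Invertible U := invertibleOfRightInverse U Uᵀ hUUt
  have hdetU2 : U.det * U.det = 1 := by
    have h := congrArg Matrix.det hUUt
    rwa [Matrix.det_mul, Matrix.det_transpose, Matrix.det_one] at h
  have hdetS : S.det = ∏ i, lam i := by
    rw [hSdecomp, Matrix.det_mul, Matrix.det_mul, Matrix.det_transpose, Matrix.det_diagonal]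
    linear_combination (∏ i, lam i) * hdetU2
  set Dinv : Matrix (Fin p) (Fin p) ℝ := Matrix.diagonal (fun i => (lam i)⁻¹) with hDinv
  have hdd : Matrix.diagonal lam * Dinv = 1 := by
    have h1 : (fun i => lam i * (lam i)⁻¹) = fun _ => (1:ℝ) :=
      funext fun i => mul_inv_cancel₀ (hl i).ne'
    rw [hDinv, Matrix.diagonal_mul_diagonal, h1, Matrix.diagonal_one]
  have hSinv : S⁻¹ = U * Dinv * Uᵀ := by
    apply Matrix.inv_eq_right_inv
    rw [hSdecomp]
    calc U * Matrix.diagonal lam * Uᵀ * (U * Dinv * Uᵀ)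
        = U * (Matrix.diagonal lam * ((Uᵀ * U) * Dinv)) * Uᵀ := by
          simp only [Matrix.mul_assoc]
      _ = 1 := by rw [hUtU, Matrix.one_mul, hdd, Matrix.mul_one, hUUt]
  have hUv : ∀ v w : Fin p → ℝ, U.mulVec v ⬝ᵥ U.mulVec w = v ⬝ᵥ w := by
    intro v w
    rw [Matrix.dotProduct_mulVec, ← Matrix.mulVec_transpose, Matrix.mulVec_mulVec, hUtU,
      Matrix.one_mulVec]
  have hdot : ∀ z : Fin p → ℝ, ∑ i, z i ^ 2 = z ⬝ᵥ z := by
    intro z; simp [dotProduct, sq]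
  have hnorm : ∀ y : Fin p → ℝ, ∑ i, (U.mulVec y) i ^ 2 = ∑ i, y i ^ 2 := by
    intro y; rw [hdot, hdot, hUv]
  have hquad : ∀ y : Fin p → ℝ,
      U.mulVec y ⬝ᵥ (S⁻¹).mulVec (U.mulVec y) = ∑ i, y i ^ 2 * (lam i)⁻¹ := by
    intro y
    have h1 : (S⁻¹).mulVec (U.mulVec y) = U.mulVec (Dinv.mulVec y) := by
      rw [hSinv, Matrix.mulVec_mulVec, Matrix.mul_assoc (U * Dinv), hUtU, Matrix.mul_one,
        ← Matrix.mulVec_mulVec]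
    rw [h1, hUv]
    simp only [dotProduct, hDinv, Matrix.mulVec_diagonal]
    exact Finset.sum_congr rfl fun i _ => by ring
  -- measure preserving change of variables
  have hdet0 : U.det ≠ 0 := by
    intro h; rw [h, zero_mul] at hdetU2; norm_num at hdetU2
  have habs : |U.det| = 1 := by nlinarith [abs_nonneg U.det, abs_mul_abs_self U.det]
  set φ : (Fin p → ℝ) → (Fin p → ℝ) := fun y => U.mulVec y with hφ
  have hφlin : φ = ⇑(Matrix.toLin' U) := by funext y; simp [hφ, Matrix.toLin'_apply]
  have hcont : Continuous φ := by
    rw [hφlin]; exact (Matrix.toLin' U).continuous_of_finiteDimensional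
  have hmap : MeasurePreserving φ volume volume := by
    refine ⟨hcont.measurable, ?_⟩
    rw [hφlin, Real.map_matrix_volume_pi_eq_smul_volume_pi hdet0, abs_inv, habs]
    simp
  have hemb : MeasurableEmbedding φ := by
    have heq : φ = ⇑((Matrix.toLinearEquiv' U hinv).toContinuousLinearEquiv.toHomeomorph) := by
      funext y
      simp [hφ, Matrix.toLinearEquiv', Matrix.toLin'_apply]
    rw [heq]
    exact (Matrix.toLinearEquiv' U hinv).toContinuousLinearEquiv.toHomeomorph.measurableEmbedding
  -- normalization constant
  have hc0 : (Real.sqrt ((2 * Real.pi) ^ p * ((2 : ℝ) • S).det))⁻¹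
      = ∏ i, (Real.sqrt (4 * Real.pi * lam i))⁻¹ := by
    have h1 : (2 * Real.pi) ^ p * ((2 : ℝ) • S).det = ∏ i, (4 * Real.pi * lam i) := by
      rw [Matrix.det_smul, hdetS, Fintype.card_fin, Finset.prod_mul_distrib, Finset.prod_const,
        Finset.card_univ, Fintype.card_fin, ← mul_assoc, ← mul_pow,
        show (2 * Real.pi * 2 : ℝ) = 4 * Real.pi by ring]
    rw [h1, sqrt_prod' _ _ fun i _ => by have := hl i; positivity, ← Finset.prod_inv_distrib]
  set g : Fin p → ℝ → ℝ := fun i x => (Real.sqrt (4 * Real.pi * lam i))⁻¹ *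
    (Real.exp (-x ^ 2 / (2 * τ ^ 2)) * Real.exp (-(x ^ 2 * (lam i)⁻¹) / 4)) with hg
  have hI : (∫ z : Fin p → ℝ,
        Real.exp (-(∑ i, z i ^ 2) / (2 * τ ^ 2)) *
          ((Real.sqrt ((2 * Real.pi) ^ p * ((2 : ℝ) • S).det))⁻¹ *
            Real.exp (-(z ⬝ᵥ (S⁻¹).mulVec z) / 4)))
      = (Real.sqrt (∏ i, (2 * lam i / τ ^ 2 + 1)))⁻¹ := by
    rw [← hmap.integral_comp hemb]
    have hpt : ∀ y : Fin p → ℝ,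
        Real.exp (-(∑ i, (φ y) i ^ 2) / (2 * τ ^ 2)) *
          ((Real.sqrt ((2 * Real.pi) ^ p * ((2 : ℝ) • S).det))⁻¹ *
            Real.exp (-(φ y ⬝ᵥ (S⁻¹).mulVec (φ y)) / 4))
        = ∏ i, g i (y i) := by
      intro y
      rw [hφ]
      simp only
      rw [hnorm y, hquad y, hc0, hg]
      simp only
      rw [show -(∑ i, y i ^ 2) / (2 * τ ^ 2) = ∑ i, (-(y i ^ 2) / (2 * τ ^ 2)) by
        rw [← Finset.sum_div, ← Finset.sum_neg_distrib]]
      rw [show -(∑ i, y i ^ 2 * (lam i)⁻¹) / 4 = ∑ i, (-(y i ^ 2 * (lam i)⁻¹) / 4) by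
        rw [← Finset.sum_div, ← Finset.sum_neg_distrib]]
      rw [Real.exp_sum, Real.exp_sum, Finset.prod_mul_distrib, Finset.prod_mul_distrib]
      ring
    rw [show (fun y => Real.exp (-(∑ i, (φ y) i ^ 2) / (2 * τ ^ 2)) *
          ((Real.sqrt ((2 * Real.pi) ^ p * ((2 : ℝ) • S).det))⁻¹ *
            Real.exp (-(φ y ⬝ᵥ (S⁻¹).mulVec (φ y)) / 4))) = fun y => ∏ i, g i (y i) from
      funext hpt]
    rw [MeasureTheory.volume_pi, MeasureTheory.integral_fintype_prod_eq_prod (ι := Fin p) g]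
    rw [show (∏ i, ∫ x : ℝ, g i x) = ∏ i, (Real.sqrt (2 * lam i / τ ^ 2 + 1))⁻¹ from
      Finset.prod_congr rfl fun i _ => one_dim (lam i) τ (hl i) hτ]
    rw [sqrt_prod' _ _ fun i _ => by have := hl i; positivity, ← Finset.prod_inv_distrib]
  have hProd1 : (1:ℝ) ≤ ∏ i, (2 * lam i / τ ^ 2 + 1) := by
    calc (1:ℝ) = ∏ _i : Fin p, (1:ℝ) := by simp
      _ ≤ ∏ i, (2 * lam i / τ ^ 2 + 1) := by
          apply Finset.prod_le_prod (fun i _ => by norm_num)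
          intro i _
          have h0 := hl i
          have h1 : 0 ≤ 2 * lam i / τ ^ 2 := by positivity
          linarith
  have hsq1 : (1:ℝ) ≤ Real.sqrt (∏ i, (2 * lam i / τ ^ 2 + 1)) := by
    have h := Real.sqrt_le_sqrt hProd1
    rwa [Real.sqrt_one] at h
  refine ⟨hI, ?_, ?_⟩
  · rw [hI]
    have hub : (∏ i, (2 * lam i / τ ^ 2 + 1)) ≤ Real.exp (2 * (C / c)) := by
      rcases Nat.eq_zero_or_pos p with hp | hp
      · subst hp
        simp
        positivity
      · have hp' : (0:ℝ) < (p:ℝ) := by exact_mod_cast hp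
        have hcp : (0:ℝ) < c * p := mul_pos hc hp'
        have hle : ∀ i, 2 * lam i / τ ^ 2 + 1 ≤ Real.exp (2 * C / (c * p)) := by
          intro i
          have h1 : 2 * lam i / τ ^ 2 ≤ 2 * C / (c * p) :=
            div_le_div₀ (by positivity) (by linarith [(hlam i).2]) hcp hτc
          have h2 := Real.add_one_le_exp (2 * C / (c * p))
          linarith
        calc ∏ i, (2 * lam i / τ ^ 2 + 1)
            ≤ ∏ _i : Fin p, Real.exp (2 * C / (c * p)) :=
              Finset.prod_le_prod (fun i _ => by have := hl i; positivity) (fun i _ => hle i)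
          _ = Real.exp (2 * C / (c * p)) ^ p := by
              rw [Finset.prod_const, Finset.card_univ, Fintype.card_fin]
          _ = Real.exp ((p:ℝ) * (2 * C / (c * p))) := by rw [Real.exp_nat_mul]
          _ = Real.exp (2 * (C / c)) := by
              congr 1
              field_simp
    have hse : Real.sqrt (Real.exp (2 * (C / c))) = Real.exp (C / c) := by
      rw [show 2 * (C / c) = C / c + C / c by ring, Real.exp_add,
        Real.sqrt_mul_self (Real.exp_nonneg _)]
    have h2 : Real.sqrt (∏ i, (2 * lam i / τ ^ 2 + 1)) ≤ Real.exp (C / c) := by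
      have := Real.sqrt_le_sqrt hub
      rwa [hse] at this
    calc Real.exp (-(C / c)) = (Real.exp (C / c))⁻¹ := Real.exp_neg _
      _ ≤ (Real.sqrt (∏ i, (2 * lam i / τ ^ 2 + 1)))⁻¹ :=
          inv_anti₀ (by linarith) h2
  · rw [hI]
    exact inv_le_one_of_one_le₀ hsq1
end
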